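/- Let σ: ℝ → ℝ be slope-restricted in [0,1], W ∈ ℝⁿˣⁿ, and Λ a positive diagonal matrix such that 2Λ - ΛW - WᵀΛ is positive definite. Then for any fixed c ∈ ℝⁿ, the equation z = σ(Wz + c) (σ elementwise) has at most one solution z ∈ ℝⁿ. -/

import Mathlib

open Matrix

/-- Uniqueness of equilibria: if `σ` is slope-restricted in `[0,1]` and
`2Λ - ΛW - WᵀΛ ≻ 0` for some positive diagonal `Λ`, then for each fixed `c`,
the equation `z = σ(Wz + c)` has at most one solution. -/
theorem equilibrium_unique
    {n : ℕ} (σ : ℝ → ℝ)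
    (hσ : ∀ x y : ℝ, x ≠ y →
      0 ≤ (σ x - σ y) / (x - y) ∧ (σ x - σ y) / (x - y) ≤ 1)
    (W : Matrix (Fin n) (Fin n) ℝ) (d : Fin n → ℝ) (hd : ∀ i, 0 < d i)
    (hW : ((2 : ℝ) • Matrix.diagonal d - Matrix.diagonal d * W -
        Wᵀ * Matrix.diagonal d).PosDef)
    (c : Fin n → ℝ) (z₁ z₂ : Fin n → ℝ)
    (h₁ : z₁ = fun i => σ ((W.mulVec z₁ + c) i))
    (h₂ : z₂ = fun i => σ ((W.mulVec z₂ + c) i)) :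
    z₁ = z₂ := by
  classical
  by_contra hne
  set e : Fin n → ℝ := z₁ - z₂ with he
  have hene : e ≠ 0 := by
    intro h
    apply hne
    funext i
    have := congrFun h i
    simpa [he, sub_eq_zero] using this
  set D := Matrix.diagonal d with hD
  have hpos := hW.dotProduct_mulVec_pos hene
  have key : ∀ i, 0 ≤ e i * ((W.mulVec e) i - e i) := by
    intro i
    have hu : e i = σ ((W.mulVec z₁ + c) i) - σ ((W.mulVec z₂ + c) i) := by
      have a := congrFun h₁ i
      have b := congrFun h₂ i
      simp only [he, Pi.sub_apply]
      rw [a, b]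
    have hWe : (W.mulVec e) i = (W.mulVec z₁ + c) i - (W.mulVec z₂ + c) i := by
      simp [he, Matrix.mulVec_sub]
    set x := (W.mulVec z₁ + c) i
    set y := (W.mulVec z₂ + c) i
    rw [hu, hWe]
    rcases eq_or_ne x y with h | h
    · simp [h]
    · obtain ⟨h0, h1⟩ := hσ x y h
      have hxy : x - y ≠ 0 := sub_ne_zero.mpr h
      have ht : σ x - σ y = ((σ x - σ y) / (x - y)) * (x - y) := by
        field_simp
      rw [ht]
      nlinarith [mul_nonneg (mul_nonneg h0 (sub_nonneg.mpr h1)) (sq_nonneg (x - y))]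
  have hform : e ⬝ᵥ (((2 : ℝ) • D - D * W - Wᵀ * D) *ᵥ e)
      = -2 * ∑ i, d i * (e i * ((W *ᵥ e) i - e i)) := by
    rw [Matrix.sub_mulVec, Matrix.sub_mulVec, dotProduct_sub, dotProduct_sub,
      Matrix.smul_mulVec, dotProduct_smul]
    rw [← Matrix.mulVec_mulVec, ← Matrix.mulVec_mulVec]
    rw [Matrix.dotProduct_mulVec e Wᵀ, Matrix.vecMul_transpose]
    simp only [hD, Matrix.mulVec_diagonal, dotProduct, smul_eq_mul,
      Finset.mul_sum, Finset.sum_sub_distrib, ← Finset.sum_sub_distrib,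
      mul_sub, sub_mul, neg_mul, Finset.sum_neg_distrib]
    ring_nf
    apply Finset.sum_congr rfl
    intro i _
    ring
  have hsum : 0 ≤ ∑ i, d i * (e i * ((W *ᵥ e) i - e i)) :=
    Finset.sum_nonneg fun i _ => mul_nonneg (hd i).le (key i)
  have : (0:ℝ) < e ⬝ᵥ (((2 : ℝ) • D - D * W - Wᵀ * D) *ᵥ e) := by
    simpa using hpos
  rw [hform] at this
  linarith
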